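/- Let $\rho_{\mathcal{R}}$ be a finite, normalised, sensitive risk measure on $L^{\infty}_{\mathbb{P}}$ that is continuous from above, so that $\rho_{\mathcal{R}}(X) = \max_{\mu \in \mathrm{dom}(\rho_{\mathcal{R}}^*)} \int X d\mu - \rho_{\mathcal{R}}^*(\mu)$ with the maximum attained. Then the following are equivalent: (i) every $\mu \in E_0 := \{\mu \mid \rho_{\mathcal{R}}^*(\mu) = 0\}$ is equivalent to $\mathbb{P}$; (ii) for all $A \in \mathcal{F}$ with $\mathbb{P}(A) > 0$, $\rho_{\mathcal{R}}(-k\mathbf{1}_A) < 0$ for sufficiently large $k > 0$; (iii) $\rho_{\mathcal{R}}(-X) < 0$ for all $X \in (L^{\infty}_{\mathbb{P}})_{++}$. -/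

import Mathlib

/-!
Statement 10 (Theorem R10): Characterisation of `E₀ = 𝒫` for a finite,
normalised, sensitive risk measure continuous from above, via the ability of
the risk measure to identify arbitrage.
-/

open MeasureTheory

def BM (Ω : Type*) [MeasurableSpace Ω] : Submodule ℝ (Ω → ℝ) where
  carrier := {f | Measurable f ∧ ∃ C : ℝ, ∀ ω, |f ω| ≤ C}
  add_mem' := by
    rintro f g ⟨hf, Cf, hCf⟩ ⟨hg, Cg, hCg⟩
    exact ⟨hf.add hg, Cf + Cg, fun ω =>
      (abs_add_le _ _).trans (add_le_add (hCf ω) (hCg ω))⟩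
  zero_mem' := ⟨measurable_const, 0, fun ω => by simp⟩
  smul_mem' := by
    rintro c f ⟨hf, Cf, hCf⟩
    refine ⟨hf.const_smul c, |c| * Cf, fun ω => ?_⟩
    have h : |(c • f) ω| = |c| * |f ω| := by simp [abs_mul]
    rw [h]
    exact mul_le_mul_of_nonneg_left (hCf ω) (abs_nonneg c)

variable {Ω : Type*} [MeasurableSpace Ω]

noncomputable instance : PartialOrder (BM Ω) :=
  PartialOrder.lift (fun f => (f : Ω → ℝ)) Subtype.coe_injective

noncomputable def indBM (A : Set Ω) (hA : MeasurableSet A) : BM Ω :=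
  ⟨A.indicator fun _ => (1 : ℝ),
    (measurable_const (a := (1 : ℝ))).indicator hA, 1, fun ω => by
      by_cases h : ω ∈ A <;> simp [Set.indicator_apply, h]⟩

/-- The conjugate of `ρ` at a (countably additive) measure. -/
noncomputable def rstarM (ρ : BM Ω → ℝ) (ν : Measure Ω) : EReal :=
  ⨆ X : BM Ω, ((∫ ω, (X : Ω → ℝ) ω ∂ν - ρ X : ℝ) : EReal)

lemma BM.integrable' (X : BM Ω) (ν : Measure Ω) [IsFiniteMeasure ν] :
    Integrable (X : Ω → ℝ) ν := by
  obtain ⟨hm, C, hC⟩ := X.2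
  exact (integrable_const C).mono' hm.aestronglyMeasurable
    (Filter.Eventually.of_forall fun ω => by simpa [Real.norm_eq_abs] using hC ω)

lemma rstar_ge (ρ : BM Ω → ℝ) (ν : Measure Ω) (X : BM Ω) :
    ((∫ ω, (X : Ω → ℝ) ω ∂ν - ρ X : ℝ) : EReal) ≤ rstarM ρ ν := by
  rw [rstarM]; exact le_iSup (fun X : BM Ω => ((∫ ω, (X : Ω → ℝ) ω ∂ν - ρ X : ℝ) : EReal)) X

lemma rstar_nonneg (ρ : BM Ω → ℝ) (hnorm : ρ 0 = 0) (ν : Measure Ω) :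
    (0 : EReal) ≤ rstarM ρ ν := by
  have h := rstar_ge ρ ν 0
  simpa [hnorm] using h

lemma rep_real (ρ : BM Ω → ℝ) (hnorm : ρ 0 = 0) (ν : Measure Ω) (X : BM Ω)
    (hne : rstarM ρ ν ≠ ⊤)
    (heq : (ρ X : EReal) = ((∫ ω, (X : Ω → ℝ) ω ∂ν : ℝ) : EReal) - rstarM ρ ν) :
    ∃ r : ℝ, 0 ≤ r ∧ rstarM ρ ν = (r : EReal) ∧
      ρ X = ∫ ω, (X : Ω → ℝ) ω ∂ν - r := by
  have h0 := rstar_nonneg ρ hnorm ν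
  have hbot : rstarM ρ ν ≠ ⊥ := fun h => by simp [h] at h0
  set r := (rstarM ρ ν).toReal with hr
  have hc : ((r : ℝ) : EReal) = rstarM ρ ν := EReal.coe_toReal hne hbot
  refine ⟨r, ?_, hc.symm, ?_⟩
  · exact_mod_cast hc ▸ h0
  · rw [← hc, ← EReal.coe_sub] at heq
    exact_mod_cast heq

theorem stmt10 (P : Measure Ω) [IsProbabilityMeasure P]
    (ρ : BM Ω → ℝ)
    -- ρ is a risk measure: convex and monotone (ℙ-a.s. order)
    (hconv : ∀ X Y : BM Ω, ∀ t : ℝ, 0 ≤ t → t ≤ 1 →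
      ρ (t • X + (1 - t) • Y) ≤ t * ρ X + (1 - t) * ρ Y)
    (hmono : ∀ X Y : BM Ω, (∀ᵐ ω ∂P, (X : Ω → ℝ) ω ≤ (Y : Ω → ℝ) ω) → ρ X ≤ ρ Y)
    -- ρ is normalised
    (hnorm : ρ 0 = 0)
    -- ρ is sensitive
    (hsens : ∀ X : BM Ω, (∀ᵐ ω ∂P, 0 ≤ (X : Ω → ℝ) ω) →
      ¬ ((X : Ω → ℝ) =ᵐ[P] 0) → 0 < ρ X)
    -- ρ is continuous from above
    (hca : ∀ (X : ℕ → BM Ω) (Y : BM Ω),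
      (∀ n m : ℕ, n ≤ m → X m ≤ X n) →
      (∀ ω, Filter.Tendsto (fun n => (X n : Ω → ℝ) ω) Filter.atTop (nhds ((Y : Ω → ℝ) ω))) →
      Filter.Tendsto (fun n => ρ (X n)) Filter.atTop (nhds (ρ Y)))
    -- dom(ρ*) ⊆ (ca_ℙ)₊
    (hdom : ∀ ν : Measure Ω, rstarM ρ ν ≠ ⊤ → ν ≪ P ∧ IsFiniteMeasure ν)
    -- dual representation with attained maximum
    (hrep : ∀ X : BM Ω, ∃ ν : Measure Ω, rstarM ρ ν ≠ ⊤ ∧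
      (ρ X : EReal) = ((∫ ω, (X : Ω → ℝ) ω ∂ν : ℝ) : EReal) - rstarM ρ ν) :
    -- (i) ↔ (ii) ↔ (iii)
    ((∀ ν : Measure Ω, rstarM ρ ν = 0 →
        ∀ A : Set Ω, MeasurableSet A → (ν A = 0 ↔ P A = 0)) ↔
      (∀ (A : Set Ω) (hA : MeasurableSet A), 0 < P A →
        ∃ K : ℝ, ∀ k : ℝ, K ≤ k → ρ (-(k • indBM A hA)) < 0)) ∧
    ((∀ (A : Set Ω) (hA : MeasurableSet A), 0 < P A →
        ∃ K : ℝ, ∀ k : ℝ, K ≤ k → ρ (-(k • indBM A hA)) < 0) ↔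
      (∀ X : BM Ω, (∀ᵐ ω ∂P, 0 ≤ (X : Ω → ℝ) ω) →
        ¬ ((X : Ω → ℝ) =ᵐ[P] 0) → ρ (-X) < 0)) := by
  -- (iii) → (ii)
  have h3to2 : (∀ X : BM Ω, (∀ᵐ ω ∂P, 0 ≤ (X : Ω → ℝ) ω) →
        ¬ ((X : Ω → ℝ) =ᵐ[P] 0) → ρ (-X) < 0) →
      (∀ (A : Set Ω) (hA : MeasurableSet A), 0 < P A →
        ∃ K : ℝ, ∀ k : ℝ, K ≤ k → ρ (-(k • indBM A hA)) < 0) := by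
    intro h3 A hA hPA
    refine ⟨1, fun k hk => ?_⟩
    have hk0 : (0 : ℝ) < k := lt_of_lt_of_le one_pos hk
    refine h3 (k • indBM A hA) (Filter.Eventually.of_forall fun ω => ?_) ?_
    · by_cases h : ω ∈ A <;> simp [indBM, Set.indicator_apply, h, hk0.le]
    · intro hz
      have hsub : A ⊆ {ω | ((k • indBM A hA : BM Ω) : Ω → ℝ) ω ≠ 0} := by
        intro ω hω
        simp [indBM, Set.indicator_apply, hω, hk0.ne']
      have : P {ω | ((k • indBM A hA : BM Ω) : Ω → ℝ) ω ≠ 0} = 0 := by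
        rw [← MeasureTheory.ae_iff]
        exact hz
      exact absurd (measure_mono_null hsub this) hPA.ne'
  -- (ii) → (iii)
  have h2to3 : (∀ (A : Set Ω) (hA : MeasurableSet A), 0 < P A →
        ∃ K : ℝ, ∀ k : ℝ, K ≤ k → ρ (-(k • indBM A hA)) < 0) →
      (∀ X : BM Ω, (∀ᵐ ω ∂P, 0 ≤ (X : Ω → ℝ) ω) →
        ¬ ((X : Ω → ℝ) =ᵐ[P] 0) → ρ (-X) < 0) := by
    intro h2 X hX0 hXne
    obtain ⟨ε, hε, hPA⟩ : ∃ ε : ℝ, 0 < ε ∧ 0 < P {ω | ε ≤ (X : Ω → ℝ) ω} := by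
      by_contra hc
      push_neg at hc
      have hall : ∀ n : ℕ, P {ω | (1 : ℝ)/(n+1) ≤ (X : Ω → ℝ) ω} = 0 := fun n =>
        le_antisymm (hc ((1:ℝ)/(n+1)) (by positivity)) zero_le
      have hae : ∀ᵐ ω ∂P, ∀ n : ℕ, ¬ ((1 : ℝ)/(n+1) ≤ (X : Ω → ℝ) ω) := by
        rw [MeasureTheory.ae_all_iff]
        intro n
        rw [MeasureTheory.ae_iff]
        simpa using hall n
      apply hXne
      filter_upwards [hX0, hae] with ω h0 hn
      have hle : (X : Ω → ℝ) ω ≤ 0 := by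
        by_contra h
        push_neg at h
        obtain ⟨n, hn'⟩ := exists_nat_one_div_lt h
        exact hn n (by exact_mod_cast hn'.le)
      exact le_antisymm hle h0
    set A := {ω | ε ≤ (X : Ω → ℝ) ω} with hAdef
    have hAm : MeasurableSet A := measurableSet_le measurable_const X.2.1
    obtain ⟨K, hK⟩ := h2 A hAm hPA
    set k := max K ε with hkdef
    have hkε : ε ≤ k := le_max_right _ _
    have hk0 : (0 : ℝ) < k := lt_of_lt_of_le hε hkε
    have hρk := hK k (le_max_left _ _)
    have hsm : (ε/k) • (-(k • indBM A hAm)) + (1 - ε/k) • (0 : BM Ω)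
        = -(ε • indBM A hAm) := by
      rw [smul_zero, add_zero, smul_neg, smul_smul, div_mul_cancel₀ _ hk0.ne']
    have hconv' := hconv (-(k • indBM A hAm)) 0 (ε/k) (by positivity)
      ((div_le_one hk0).mpr hkε)
    rw [hsm, hnorm, mul_zero, add_zero] at hconv'
    have h1 : ρ (-(ε • indBM A hAm)) < 0 :=
      lt_of_le_of_lt hconv' (mul_neg_of_pos_of_neg (div_pos hε hk0) hρk)
    refine lt_of_le_of_lt (hmono (-X) (-(ε • indBM A hAm)) ?_) h1
    filter_upwards [hX0] with ω h0
    by_cases h : ω ∈ A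
    · have hεX : ε ≤ (X : Ω → ℝ) ω := h
      simp only [NegMemClass.coe_neg, SetLike.val_smul, Pi.neg_apply, Pi.smul_apply,
        indBM, Set.indicator_apply, if_pos h, smul_eq_mul, mul_one]
      linarith
    · simp only [NegMemClass.coe_neg, SetLike.val_smul, Pi.neg_apply, Pi.smul_apply,
        indBM, Set.indicator_apply, if_neg h, smul_eq_mul, mul_zero, neg_zero]
      linarith
  -- (i) → (iii)
  have h1to3 : (∀ ν : Measure Ω, rstarM ρ ν = 0 →
        ∀ A : Set Ω, MeasurableSet A → (ν A = 0 ↔ P A = 0)) →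
      (∀ X : BM Ω, (∀ᵐ ω ∂P, 0 ≤ (X : Ω → ℝ) ω) →
        ¬ ((X : Ω → ℝ) =ᵐ[P] 0) → ρ (-X) < 0) := by
    intro h1 X hX0 hXne
    obtain ⟨ν, hne, heq⟩ := hrep (-X)
    obtain ⟨hac, hfin⟩ := hdom ν hne
    haveI := hfin
    obtain ⟨r, hr0, hrν, hρ⟩ := rep_real ρ hnorm ν (-X) hne heq
    have hXν : ∀ᵐ ω ∂ν, 0 ≤ (X : Ω → ℝ) ω := hac.ae_le hX0
    have hIneg : ∫ ω, ((-X : BM Ω) : Ω → ℝ) ω ∂ν = - ∫ ω, (X : Ω → ℝ) ω ∂ν := by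
      simp [integral_neg]
    have hI0 : 0 ≤ ∫ ω, (X : Ω → ℝ) ω ∂ν := integral_nonneg_of_ae hXν
    rw [hIneg] at hρ
    have hle : ρ (-X) ≤ 0 := by linarith
    rcases hle.lt_or_eq with h | h
    · exact h
    · exfalso
      have hI : ∫ ω, (X : Ω → ℝ) ω ∂ν = 0 := by linarith
      have hr : r = 0 := by linarith
      have hr0' : rstarM ρ ν = 0 := by rw [hrν, hr]; rfl
      have hint : Integrable (X : Ω → ℝ) ν := BM.integrable' X ν
      have hXz : (X : Ω → ℝ) =ᵐ[ν] 0 :=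
        (integral_eq_zero_iff_of_nonneg_ae hXν hint).mp hI
      have hνset : ν {ω | (X : Ω → ℝ) ω ≠ 0} = 0 := by
        rw [← MeasureTheory.ae_iff]
        exact hXz
      have hBm : MeasurableSet {ω | (X : Ω → ℝ) ω ≠ 0} := by
        have hset : {ω | (X : Ω → ℝ) ω ≠ 0} = (X : Ω → ℝ) ⁻¹' ({0}ᶜ) := by
          ext ω; simp
        rw [hset]
        exact X.2.1 (measurableSet_singleton 0).compl
      exact hXne ((MeasureTheory.ae_iff).mpr ((h1 ν hr0' _ hBm).mp hνset))
  -- (ii) → (i)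
  have h2to1 : (∀ (A : Set Ω) (hA : MeasurableSet A), 0 < P A →
        ∃ K : ℝ, ∀ k : ℝ, K ≤ k → ρ (-(k • indBM A hA)) < 0) →
      (∀ ν : Measure Ω, rstarM ρ ν = 0 →
        ∀ A : Set Ω, MeasurableSet A → (ν A = 0 ↔ P A = 0)) := by
    intro h2 ν hr0 A hAm
    have hne : rstarM ρ ν ≠ ⊤ := by rw [hr0]; simp
    obtain ⟨hac, hfin⟩ := hdom ν hne
    haveI := hfin
    constructor
    · intro hν0
      by_contra hP0
      have hPpos : 0 < P A := pos_iff_ne_zero.mpr hP0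
      obtain ⟨K, hK⟩ := h2 A hAm hPpos
      have hρ := hK K le_rfl
      have hge := rstar_ge ρ ν (-(K • indBM A hAm))
      rw [hr0] at hge
      have hIz : ∫ ω, ((-(K • indBM A hAm) : BM Ω) : Ω → ℝ) ω ∂ν = 0 := by
        have hz : ((-(K • indBM A hAm) : BM Ω) : Ω → ℝ) =ᵐ[ν] 0 := by
          rw [Filter.EventuallyEq, MeasureTheory.ae_iff]
          refine measure_mono_null ?_ hν0
          intro ω hω
          by_contra h
          apply hω
          simp [indBM, Set.indicator_apply, h]
        rw [integral_congr_ae hz]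
        simp
      rw [hIz] at hge
      have : (0 : ℝ) - ρ (-(K • indBM A hAm)) ≤ 0 := by exact_mod_cast hge
      linarith
    · intro hP0
      exact hac hP0
  exact ⟨⟨fun h1 => h3to2 (h1to3 h1), h2to1⟩, ⟨h2to3, h3to2⟩⟩
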